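/- Let G be a graph of order n ≥ 4 with minimum degree δ(G) ≥ (n+2)/2. Then G is panconnected: for every pair of distinct vertices u, v there exists a u–v path of every length ℓ with 2 ≤ ℓ ≤ n−1 (equivalently, of every order from 3 to n). -/

import Mathlib

open SimpleGraph

/-- `G` contains `H` as a (not necessarily induced) subgraph. -/
def Contains {V W : Type*} (G : SimpleGraph V) (H : SimpleGraph W) : Prop :=
  ∃ f : H →g G, Function.Injective f

/-- `G` has a cycle with `m` vertices (equivalently, of length `m`). -/
def HasCycleLength {V : Type*} (G : SimpleGraph V) (m : ℕ) : Prop :=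
  ∃ (v : V) (c : G.Walk v v), c.IsCycle ∧ c.length = m

/-- The Ramsey property for `K_{a,b}` versus the cycle `C_m`: every graph `Γ` on `N` vertices
contains `K_{a,b}`, or its complement contains a cycle of length `m`. -/
def RamseyProp (a b m N : ℕ) : Prop :=
  ∀ Γ : SimpleGraph (Fin N),
    Contains Γ (completeBipartiteGraph (Fin a) (Fin b)) ∨ HasCycleLength Γᶜ m

/-- `G` is `k`-connected. -/
def IsKConnected {V : Type*} [Fintype V] (k : ℕ) (G : SimpleGraph V) : Prop :=
  k < Fintype.card V ∧
    ∀ S : Finset V, S.card < k → (G.induce ((↑S : Set V)ᶜ)).Connected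

/-- The circumference of `G`: the length of a longest cycle. -/
noncomputable def circumference {V : Type*} (G : SimpleGraph V) : ℕ :=
  sSup {m | HasCycleLength G m}

namespace PanAux

open List

variable {V : Type*} {G : SimpleGraph V}

/-- Build a walk from a list whose consecutive elements are adjacent. -/
lemma exists_walk_of_chain :
    ∀ (L : List V) (a b : V), List.Chain' G.Adj (a :: L) →
      (a :: L).getLast (by simp) = b → ∃ w : G.Walk a b, w.support = a :: L := by
  intro L
  induction L with
  | nil =>
    intro a b _ hb
    simp only [List.getLast_singleton] at hb
    subst hb
    exact ⟨Walk.nil, rfl⟩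
  | cons c L ih =>
    intro a b hc hb
    have hadj : G.Adj a c := (List.isChain_cons_cons.mp hc).1
    obtain ⟨w, hw⟩ := ih c b (List.isChain_cons_cons.mp hc).2
      (by rw [← hb]; exact (List.getLast_cons (by simp)).symm)
    exact ⟨Walk.cons hadj w, by simp [hw]⟩

lemma support_getElem? {u v : V} (p : G.Walk u v) :
    ∀ (i : ℕ), i ≤ p.length → p.support[i]? = some (p.getVert i) := by
  induction p with
  | nil =>
    intro i hi
    simp only [Walk.length_nil, Nat.le_zero] at hi
    subst hi
    rfl
  | cons h q ih =>
    intro i hi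
    cases i with
    | zero => simp [Walk.support_cons, Walk.getVert_zero]
    | succ i =>
      simp only [Walk.support_cons, List.getElem?_cons_succ, Walk.getVert_cons_succ]
      exact ih i (by simpa using hi)

lemma getVert_injOn {u v : V} {p : G.Walk u v} (hp : p.IsPath) {i j : ℕ}
    (hi : i ≤ p.length) (hj : j ≤ p.length) (hij : p.getVert i = p.getVert j) : i = j := by
  apply (List.getElem?_inj (l := p.support)
    (by rw [Walk.length_support]; omega)
    (by rw [← Walk.isPath_def]; exact hp)).mp
  rw [support_getElem? p i hi, support_getElem? p j hj, hij]

lemma getVert_mem_support {u v : V} (p : G.Walk u v) {i : ℕ} (hi : i ≤ p.length) :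
    p.getVert i ∈ p.support :=
  Walk.mem_support_iff_exists_getVert.mpr ⟨i, rfl, hi⟩

/-- The list of vertices `p.getVert a, ..., p.getVert (a+k-1)`. -/
def seg {u v : V} (p : G.Walk u v) (a k : ℕ) : List V :=
  (List.range' a k).map p.getVert

lemma seg_eq_nil {u v : V} (p : G.Walk u v) (a : ℕ) : seg p a 0 = [] := rfl

lemma seg_succ {u v : V} (p : G.Walk u v) (a k : ℕ) :
    seg p a (k + 1) = p.getVert a :: seg p (a + 1) k := by
  simp [seg, List.range'_succ]

lemma seg_concat {u v : V} (p : G.Walk u v) (a k : ℕ) :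
    seg p a (k + 1) = seg p a k ++ [p.getVert (a + k)] := by
  simp [seg, List.range'_concat]

lemma mem_seg {u v : V} (p : G.Walk u v) {a k : ℕ} {y : V} :
    y ∈ seg p a k ↔ ∃ i, a ≤ i ∧ i < a + k ∧ y = p.getVert i := by
  simp only [seg, List.mem_map, List.mem_range'_1]
  constructor
  · rintro ⟨i, ⟨h1, h2⟩, rfl⟩; exact ⟨i, h1, h2, rfl⟩
  · rintro ⟨i, h1, h2, rfl⟩; exact ⟨i, ⟨h1, h2⟩, rfl⟩

lemma seg_chain' {u v : V} (p : G.Walk u v) :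
    ∀ (k a : ℕ), a + k ≤ p.length + 1 → (seg p a k).Chain' G.Adj := by
  intro k
  induction k with
  | zero => intro a _; simp [seg_eq_nil, List.Chain']
  | succ k ih =>
    intro a ha
    rw [seg_succ]
    cases k with
    | zero => simp [seg_eq_nil, List.Chain']
    | succ k =>
      rw [seg_succ]
      refine List.isChain_cons_cons.mpr ⟨?_, ?_⟩
      · exact p.adj_getVert_succ (by omega)
      · rw [← seg_succ]; exact ih (a + 1) (by omega)

lemma seg_head? {u v : V} (p : G.Walk u v) (a k : ℕ) (hk : k ≠ 0) :
    (seg p a k).head? = some (p.getVert a) := by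
  cases k with
  | zero => omega
  | succ k => rw [seg_succ]; rfl

lemma seg_getLast? {u v : V} (p : G.Walk u v) (a k : ℕ) (hk : k ≠ 0) :
    (seg p a k).getLast? = some (p.getVert (a + k - 1)) := by
  cases k with
  | zero => omega
  | succ k =>
    rw [seg_concat, List.getLast?_concat]
    congr 2

lemma seg_nodup {u v : V} {p : G.Walk u v} (hp : p.IsPath) (a k : ℕ)
    (hak : a + k ≤ p.length + 1) : (seg p a k).Nodup := by
  refine List.Nodup.map_on ?_ (List.nodup_range' (s := a) (n := k))
  intro i hi j hj hij
  rw [List.mem_range'_1] at hi hj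
  exact getVert_injOn hp (by omega) (by omega) hij

lemma seg_ne_nil {u v : V} (p : G.Walk u v) (a k : ℕ) (hk : k ≠ 0) :
    seg p a k ≠ [] := by
  cases k with
  | zero => omega
  | succ k => rw [seg_succ]; simp


lemma glue {u v : V} {p : G.Walk u v} (hp : p.IsPath) (j t : ℕ) (hjt : j < t) (ht : t ≤ p.length)
    (mid : List V) (hne : mid ≠ [])
    (hchain : mid.Chain' G.Adj)
    (h1 : ∀ y ∈ mid.head?, G.Adj (p.getVert j) y)
    (h2 : ∀ y ∈ mid.getLast?, G.Adj y (p.getVert t))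
    (hnd : mid.Nodup)
    (hdisj : ∀ y ∈ mid, ∀ i, i ≤ p.length → (i ≤ j ∨ t ≤ i) → y ≠ p.getVert i) :
    ∃ q : G.Walk u v, q.IsPath ∧ q.length = j + (p.length - t) + mid.length + 1 := by
  set n := p.length with hn
  set segt := seg p t (n + 1 - t) with hsegt
  set L : List V := seg p 0 (j + 1) ++ (mid ++ segt) with hL
  have hsegt_ne : segt ≠ [] := seg_ne_nil p t (n + 1 - t) (by omega)
  have hsegt_last : segt.getLast? = some v := by
    rw [hsegt, seg_getLast? p t (n + 1 - t) (by omega)]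
    have : t + (n + 1 - t) - 1 = n := by omega
    rw [this, hn, Walk.getVert_length]
  -- the chain
  have hchainL : L.Chain' G.Adj := by
    refine List.IsChain.append (seg_chain' p (j+1) 0 (by omega)) ?_ ?_
    · refine List.IsChain.append hchain (seg_chain' p (n + 1 - t) t (by omega)) ?_
      intro y hy z hz
      rw [hsegt, seg_head? p t (n + 1 - t) (by omega)] at hz
      rw [Option.mem_def, Option.some.injEq] at hz
      subst hz
      exact h2 y hy
    · intro y hy z hz
      rw [seg_getLast? p 0 (j+1) (by omega)] at hy
      rw [Option.mem_def, Option.some.injEq] at hy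
      simp only [Nat.zero_add, Nat.add_sub_cancel] at hy
      subst hy
      rw [List.head?_append_of_ne_nil _ hne] at hz
      exact h1 z hz
  -- nodup
  have hnodupL : L.Nodup := by
    rw [hL, List.nodup_append, List.nodup_append]
    refine ⟨seg_nodup hp 0 (j+1) (by omega), ⟨hnd, seg_nodup hp t (n+1-t) (by omega), ?_⟩, ?_⟩
    · -- mid disjoint segt
      intro y hy z hy' rfl
      rw [hsegt, mem_seg] at hy'
      obtain ⟨i, hi1, hi2, rfl⟩ := hy'
      exact hdisj _ hy i (by omega) (Or.inr hi1) rfl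
    · -- seg0 disjoint (mid ++ segt)
      intro y hy z hy' rfl
      rw [mem_seg] at hy
      obtain ⟨i, hi1, hi2, rfl⟩ := hy
      rw [List.mem_append] at hy'
      rcases hy' with hy' | hy'
      · exact hdisj _ hy' i (by omega) (Or.inl (by omega)) rfl
      · rw [hsegt, mem_seg] at hy'
        obtain ⟨i', hi'1, hi'2, he⟩ := hy'
        have : i' = i := getVert_injOn hp (by omega) (by omega) he.symm
        omega
  -- L starts with u
  have hL0 : L = u :: (seg p 1 j ++ (mid ++ segt)) := by
    rw [hL, seg_succ, p.getVert_zero]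
    simp
  -- L ends with v
  have hlast : L.getLast? = some v := by
    rw [hL, List.getLast?_append, List.getLast?_append, hsegt_last]
    rfl
  have hlast' : (u :: (seg p 1 j ++ (mid ++ segt))).getLast? = some v := by
    rw [← hL0]; exact hlast
  obtain ⟨q, hq⟩ := exists_walk_of_chain (seg p 1 j ++ (mid ++ segt)) u v
    (by rw [← hL0]; exact hchainL)
    (Option.some.inj ((List.getLast?_eq_getLast (by simp)).symm.trans hlast'))
  refine ⟨q, ?_, ?_⟩
  · rw [Walk.isPath_def, hq, ← hL0]
    exact hnodupL
  · have hlen : L.length = q.length + 1 := by rw [← Walk.length_support, hq, hL0]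
    have hLlen : L.length = (j + 1) + (mid.length + (n + 1 - t)) := by
      rw [hL, hsegt]
      simp [seg]
    omega

/-- Move E1: insert a new vertex `w` between consecutive path vertices. -/
lemma move_insert {u v : V} {p : G.Walk u v} (hp : p.IsPath)
    (hno : ∀ q : G.Walk u v, q.IsPath → q.length ≠ p.length + 1)
    {w : V} (hw : w ∉ p.support) {j : ℕ} (hj : j < p.length)
    (h1 : G.Adj (p.getVert j) w) (h2 : G.Adj w (p.getVert (j + 1))) : False := by
  obtain ⟨q, hq1, hq2⟩ := glue hp j (j + 1) (by omega) (by omega) [w] (by simp)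
    (by simp [List.Chain']) (by simpa using h1) (by simpa using h2) (by simp)
    (by
      intro y hy i hi _
      simp only [List.mem_singleton] at hy
      subst hy
      intro he
      exact hw (he ▸ getVert_mem_support p hi))
  apply hno q hq1
  rw [hq2]
  simp only [List.length_singleton]
  omega

/-- Move E2: insert `w` between `x j` and `x j'` and reverse the middle segment,
using the chord from `x (j+1)` to `x (j'+1)`. -/
lemma move_rot {u v : V} {p : G.Walk u v} (hp : p.IsPath)
    (hno : ∀ q : G.Walk u v, q.IsPath → q.length ≠ p.length + 1)
    {w : V} (hw : w ∉ p.support) {j j' : ℕ} (hjj : j < j') (hj' : j' + 1 ≤ p.length)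
    (ha1 : G.Adj (p.getVert j) w) (ha2 : G.Adj w (p.getVert j'))
    (hchord : G.Adj (p.getVert (j + 1)) (p.getVert (j' + 1))) : False := by
  set M := (seg p (j + 1) (j' - j)).reverse with hM
  have hMne : M ≠ [] := by
    rw [hM]
    simpa using seg_ne_nil p (j + 1) (j' - j) (by omega)
  have hMhead : M.head? = some (p.getVert j') := by
    rw [hM, List.head?_reverse, seg_getLast? p (j + 1) (j' - j) (by omega)]
    congr 2
    omega
  have hMlast : M.getLast? = some (p.getVert (j + 1)) := by
    rw [hM, List.getLast?_reverse, seg_head? p (j + 1) (j' - j) (by omega)]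
  have hmemM : ∀ y ∈ M, ∃ i, j + 1 ≤ i ∧ i ≤ j' ∧ y = p.getVert i := by
    intro y hy
    rw [hM, List.mem_reverse, mem_seg] at hy
    obtain ⟨i, hi1, hi2, rfl⟩ := hy
    exact ⟨i, hi1, by omega, rfl⟩
  obtain ⟨q, hq1, hq2⟩ := glue hp j (j' + 1) (by omega) (by omega) (w :: M)
    (by simp)
    (by
      refine List.isChain_cons.mpr ?_
      constructor
      · intro y hy
        rw [hMhead] at hy
        rw [Option.mem_def, Option.some.injEq] at hy
        subst hy
        exact ha2
      · rw [hM, List.isChain_reverse]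
        exact List.IsChain.imp (fun a b hab => hab.symm) (seg_chain' p (j' - j) (j + 1) (by omega)))
    (by simpa using ha1)
    (by
      rw [show (w :: M) = [w] ++ M from rfl, List.getLast?_append, hMlast]
      simpa using hchord)
    (by
      rw [List.nodup_cons]
      constructor
      · intro hyM
        obtain ⟨i, hi1, hi2, he⟩ := hmemM w hyM
        exact hw (he ▸ getVert_mem_support p (by omega))
      · rw [hM, List.nodup_reverse]
        exact seg_nodup hp (j + 1) (j' - j) (by omega))
    (by
      intro y hy i hi hior
      rcases List.mem_cons.mp hy with rfl | hy
      · intro he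
        exact hw (he ▸ getVert_mem_support p hi)
      · obtain ⟨i', hi'1, hi'2, rfl⟩ := hmemM y hy
        intro he
        have : i' = i := getVert_injOn hp (by omega) (by omega) he
        omega)
  apply hno q hq1
  rw [hq2]
  have : M.length = j' - j := by rw [hM]; simp [seg]
  simp only [List.length_cons, this]
  omega

/-- Move F3: replace the first three edges by a detour through `a, c, b` outside the path. -/
lemma move_f3 {u v : V} {p : G.Walk u v} (hp : p.IsPath)
    (hno : ∀ q : G.Walk u v, q.IsPath → q.length ≠ p.length + 1)
    (hl3 : 3 ≤ p.length) {a c b : V}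
    (han : a ∉ p.support) (hcn : c ∉ p.support) (hbn : b ∉ p.support)
    (hab : a ≠ b) (hac : a ≠ c) (hcb : c ≠ b)
    (h1 : G.Adj (p.getVert 0) a) (h2 : G.Adj a c) (h3 : G.Adj c b)
    (h4 : G.Adj b (p.getVert 3)) : False := by
  obtain ⟨q, hq1, hq2⟩ := glue hp 0 3 (by omega) (by omega) [a, c, b] (by simp)
    (by
      refine List.isChain_cons_cons.mpr ⟨h2, List.isChain_cons_cons.mpr ?_⟩
      exact ⟨h3, List.isChain_singleton b⟩)
    (by simpa using h1)
    (by simpa using h4)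
    (by simp [hab, hac, hcb])
    (by
      intro y hy i hi _
      intro he
      rcases List.mem_cons.mp hy with rfl | hy
      · exact han (he ▸ getVert_mem_support p hi)
      rcases List.mem_cons.mp hy with rfl | hy
      · exact hcn (he ▸ getVert_mem_support p hi)
      rcases List.mem_cons.mp hy with rfl | hy
      · exact hbn (he ▸ getVert_mem_support p hi)
      · simp at hy)
  exact hno q hq1 (by rw [hq2]; simp; omega)

section Counting

variable [Fintype V] [DecidableEq V] [DecidableRel G.Adj]

lemma degree_split (Pset : Finset V) (y : V) :
    G.degree y = (G.neighborFinset y \ Pset).card + (G.neighborFinset y ∩ Pset).card := by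
  rw [← SimpleGraph.card_neighborFinset_eq_degree]
  exact (Finset.card_sdiff_add_card_inter _ _).symm

/-- The key counting step: if `w` off the path is adjacent to `x i`, then `x (i+1)` has at
least two neighbours off the path. -/
lemma cascade (hδ : ∀ w : V, Fintype.card V + 2 ≤ 2 * G.degree w)
    {u v : V} {p : G.Walk u v} (hp : p.IsPath)
    (hno : ∀ q : G.Walk u v, q.IsPath → q.length ≠ p.length + 1)
    {i : ℕ} (hi : i + 1 ≤ p.length) {w : V} (hw : w ∉ p.support)
    (hadj : G.Adj (p.getVert i) w) :
    2 ≤ (G.neighborFinset (p.getVert (i + 1)) \ p.support.toFinset).card := by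
  set n := Fintype.card V with hn
  set l := p.length with hl
  set Pset := p.support.toFinset with hPset
  have hmemP : ∀ z, z ∈ Pset ↔ z ∈ p.support := fun z => List.mem_toFinset
  have hPcard : Pset.card = l + 1 := by
    rw [hPset, List.toFinset_card_of_nodup (Walk.isPath_def _ |>.mp hp), Walk.length_support]
  set y := p.getVert (i + 1) with hy
  set T : Finset ℕ := (Finset.range l).filter (fun j => G.Adj (p.getVert j) w) with hT
  set S : Finset V := T.image (fun j => p.getVert (j + 1)) with hS
  have hmemT : ∀ j, j ∈ T ↔ j < l ∧ G.Adj (p.getVert j) w := by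
    intro j
    rw [hT, Finset.mem_filter, Finset.mem_range]
  have hScard : S.card = T.card := by
    apply Finset.card_image_of_injOn
    intro a ha b hb hab
    rw [Finset.mem_coe, hmemT] at ha hb
    have := getVert_injOn hp (i := a + 1) (j := b + 1) (by omega) (by omega) hab
    omega
  have hSsubP : S ⊆ Pset := by
    intro z hz
    rw [hS, Finset.mem_image] at hz
    obtain ⟨j, hj, rfl⟩ := hz
    rw [hmemT] at hj
    rw [hmemP]
    exact getVert_mem_support p (by omega)
  have hiT : i ∈ T := by rw [hmemT]; exact ⟨by omega, hadj⟩
  -- S is disjoint from the neighbourhood of y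
  have hSdisj : ∀ s ∈ S, s ∉ G.neighborFinset y := by
    intro s hs hsy
    rw [hS, Finset.mem_image] at hs
    obtain ⟨j, hj, rfl⟩ := hs
    rw [hmemT] at hj
    rw [SimpleGraph.mem_neighborFinset] at hsy
    by_cases hij : i = j
    · subst hij
      exact G.irrefl hsy
    · rcases Nat.lt_or_ge i j with hlt | hge
      · exact move_rot hp hno hw hlt (by omega) hadj (hj.2.symm) hsy
      · exact move_rot hp hno hw (show j < i by omega) (by omega) hj.2 hadj.symm hsy.symm
  -- counting neighbours of y
  have hyP : (G.neighborFinset y ∩ Pset).card + S.card ≤ l + 1 := by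
    rw [← Finset.card_union_of_disjoint]
    · apply le_trans (Finset.card_le_card (show _ ⊆ Pset from ?_)) (le_of_eq hPcard)
      intro z hz
      rcases Finset.mem_union.mp hz with hz | hz
      · exact Finset.mem_of_mem_inter_right hz
      · exact hSsubP hz
    · rw [Finset.disjoint_right]
      intro s hs
      intro hmem
      exact hSdisj s hs (Finset.mem_of_mem_inter_left hmem)
  -- counting neighbours of w on the path
  have hwP : (G.neighborFinset w ∩ Pset).card ≤ T.card + 1 := by
    have hsub : G.neighborFinset w ∩ Pset ⊆ T.image (fun j => p.getVert j) ∪ {p.getVert l} := by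
      intro z hz
      have hz1 := Finset.mem_of_mem_inter_left hz
      have hz2 := Finset.mem_of_mem_inter_right hz
      rw [SimpleGraph.mem_neighborFinset] at hz1
      rw [hmemP, Walk.mem_support_iff_exists_getVert] at hz2
      obtain ⟨k, rfl, hk⟩ := hz2
      rcases Nat.lt_or_ge k l with hkl | hkl
      · exact Finset.mem_union_left _ (Finset.mem_image.mpr ⟨k, (hmemT k).mpr ⟨hkl, hz1.symm⟩, rfl⟩)
      · have hkeq : k = l := by omega
        subst hkeq
        exact Finset.mem_union_right _ (Finset.mem_singleton_self _)
    have h1 := Finset.card_le_card hsub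
    have h2 := Finset.card_union_le (T.image (fun j => p.getVert j)) ({p.getVert l} : Finset V)
    have h3 := Finset.card_image_le (s := T) (f := fun j => p.getVert j)
    have h4 : ({p.getVert l} : Finset V).card = 1 := Finset.card_singleton _
    omega
  -- counting neighbours of w off the path
  have hwW : (G.neighborFinset w \ Pset).card + l + 2 ≤ n := by
    have hwW' : w ∈ Finset.univ \ Pset :=
      Finset.mem_sdiff.mpr ⟨Finset.mem_univ _, fun hc => hw ((hmemP w).mp hc)⟩
    have hsub : G.neighborFinset w \ Pset ⊆ (Finset.univ \ Pset).erase w := by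
      intro z hz
      rw [Finset.mem_erase]
      refine ⟨?_, Finset.mem_sdiff.mpr ⟨Finset.mem_univ _, (Finset.mem_sdiff.mp hz).2⟩⟩
      rintro rfl
      have hzz := (Finset.mem_sdiff.mp hz).1
      rw [SimpleGraph.mem_neighborFinset] at hzz
      exact G.irrefl hzz
    have h1 := Finset.card_le_card hsub
    have h2 := Finset.card_erase_of_mem hwW'
    have h3 : (Finset.univ \ Pset).card = n - Pset.card := by
      rw [Finset.card_sdiff_of_subset (Finset.subset_univ _), Finset.card_univ]
    have h4 : Pset.card ≤ n :=
      le_trans (Finset.card_le_univ _) (le_of_eq Finset.card_univ)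
    have h5 : 1 ≤ (Finset.univ \ Pset).card := Finset.card_pos.mpr ⟨w, hwW'⟩
    omega
  -- assemble
  have hdy := degree_split (G := G) Pset y
  have hdw := degree_split (G := G) Pset w
  have hδy := hδ y
  have hδw := hδ w
  have hTcard : 1 ≤ T.card := Finset.card_pos.mpr ⟨i, hiT⟩
  omega

/-- Mirror version of `cascade`. -/
lemma cascade' (hδ : ∀ w : V, Fintype.card V + 2 ≤ 2 * G.degree w)
    {u v : V} {p : G.Walk u v} (hp : p.IsPath)
    (hno : ∀ q : G.Walk u v, q.IsPath → q.length ≠ p.length + 1)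
    {i : ℕ} (h1 : 1 ≤ i) (h2 : i ≤ p.length) {w : V} (hw : w ∉ p.support)
    (hadj : G.Adj (p.getVert i) w) :
    2 ≤ (G.neighborFinset (p.getVert (i - 1)) \ p.support.toFinset).card := by
  have hno' : ∀ q : G.Walk v u, q.IsPath → q.length ≠ p.reverse.length + 1 := by
    intro q hq hlen
    apply hno q.reverse hq.reverse
    rw [Walk.length_reverse] at hlen ⊢
    exact hlen
  have hw' : w ∉ p.reverse.support := by
    rw [Walk.support_reverse, List.mem_reverse]
    exact hw
  have hadj' : G.Adj (p.reverse.getVert (p.length - i)) w := by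
    rw [Walk.getVert_reverse]
    have he : p.length - (p.length - i) = i := by omega
    rw [he]
    exact hadj
  have key := cascade hδ hp.reverse hno' (i := p.length - i)
    (by rw [Walk.length_reverse]; omega) hw' hadj'
  have he1 : p.reverse.getVert (p.length - i + 1) = p.getVert (i - 1) := by
    rw [Walk.getVert_reverse]
    congr 1
    omega
  have he2 : p.reverse.support.toFinset = p.support.toFinset := by
    rw [Walk.support_reverse, List.toFinset_reverse]
  rw [he1, he2] at key
  exact key

/-- Half of the degree of an off-path vertex is off the path. -/
lemma offpath_halfdeg (hδ : ∀ w : V, Fintype.card V + 2 ≤ 2 * G.degree w)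
    {u v : V} {p : G.Walk u v} (hp : p.IsPath)
    (hno : ∀ q : G.Walk u v, q.IsPath → q.length ≠ p.length + 1)
    {z : V} (hz : z ∉ p.support) :
    Fintype.card V ≤ p.length + 2 * (G.neighborFinset z \ p.support.toFinset).card := by
  set n := Fintype.card V with hn
  set l := p.length with hl
  set Pset := p.support.toFinset with hPset
  set Tz : Finset ℕ := (Finset.range (l + 1)).filter (fun j => G.Adj (p.getVert j) z) with hTz
  have hmemT : ∀ j, j ∈ Tz ↔ j ≤ l ∧ G.Adj (p.getVert j) z := by
    intro j
    rw [hTz, Finset.mem_filter, Finset.mem_range, Nat.lt_succ_iff]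
  have hnoconsec : ∀ j, j ∈ Tz → j + 1 ∉ Tz := by
    intro j hj hj1
    rw [hmemT] at hj hj1
    obtain ⟨hja, hjb⟩ := hj
    obtain ⟨hj1a, hj1b⟩ := hj1
    exact move_insert hp hno hz (by omega) hjb hj1b.symm
  -- 2 * Tz.card ≤ l + 2
  have hTcard : 2 * Tz.card ≤ l + 2 := by
    have hdisj : Disjoint Tz (Tz.image (fun j => j + 1)) := by
      rw [Finset.disjoint_right]
      intro j hj hj'
      rw [Finset.mem_image] at hj
      obtain ⟨k, hk, rfl⟩ := hj
      exact hnoconsec k hk hj'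
    have himcard : (Tz.image (fun j => j + 1)).card = Tz.card :=
      Finset.card_image_of_injOn (fun a _ b _ h => by omega)
    have hsub : Tz ∪ Tz.image (fun j => j + 1) ⊆ Finset.range (l + 2) := by
      intro j hj
      rw [Finset.mem_range]
      rcases Finset.mem_union.mp hj with hj | hj
      · rw [hmemT] at hj; omega
      · rw [Finset.mem_image] at hj
        obtain ⟨k, hk, rfl⟩ := hj
        rw [hmemT] at hk
        omega
    have h1 := Finset.card_le_card hsub
    rw [Finset.card_union_of_disjoint hdisj, himcard, Finset.card_range] at h1
    omega
  -- neighbours of z on the path are bounded by Tz.card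
  have hzP : (G.neighborFinset z ∩ Pset).card ≤ Tz.card := by
    have hsub : G.neighborFinset z ∩ Pset ⊆ Tz.image (fun j => p.getVert j) := by
      intro y hy
      have hy1 := Finset.mem_of_mem_inter_left hy
      have hy2 := Finset.mem_of_mem_inter_right hy
      rw [SimpleGraph.mem_neighborFinset] at hy1
      rw [hPset, List.mem_toFinset, Walk.mem_support_iff_exists_getVert] at hy2
      obtain ⟨k, rfl, hk⟩ := hy2
      exact Finset.mem_image.mpr ⟨k, (hmemT k).mpr ⟨hk, hy1.symm⟩, rfl⟩
    exact le_trans (Finset.card_le_card hsub) Finset.card_image_le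
  have hd := degree_split (G := G) Pset z
  have hδz := hδ z
  omega

/-- The extension lemma: any `u,v`-path of length `3 ≤ l ≤ n-2` can be lengthened by one. -/
lemma extension (hδ : ∀ w : V, Fintype.card V + 2 ≤ 2 * G.degree w)
    {u v : V} {p : G.Walk u v} (hp : p.IsPath) (hl3 : 3 ≤ p.length)
    (hl2 : p.length + 2 ≤ Fintype.card V) :
    ∃ q : G.Walk u v, q.IsPath ∧ q.length = p.length + 1 := by
  by_contra hno
  push_neg at hno
  have hPcard : p.support.toFinset.card = p.length + 1 := by
    rw [List.toFinset_card_of_nodup (Walk.isPath_def _ |>.mp hp), Walk.length_support]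
  have hmemA : ∀ (i : ℕ) (z : V),
      z ∈ G.neighborFinset (p.getVert i) \ p.support.toFinset ↔
        G.Adj (p.getVert i) z ∧ z ∉ p.support := by
    intro i z
    simp only [Finset.mem_sdiff, SimpleGraph.mem_neighborFinset, List.mem_toFinset]
  have hWcard : (Finset.univ \ p.support.toFinset).card = Fintype.card V - (p.length + 1) := by
    rw [Finset.card_sdiff_of_subset (Finset.subset_univ _), Finset.card_univ, hPcard]
  have hWne : ∃ w : V, w ∉ p.support := by
    have h0 : 0 < (Finset.univ \ p.support.toFinset).card := by omega
    obtain ⟨w, hw⟩ := Finset.card_pos.mp h0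
    exact ⟨w, fun hc => (Finset.mem_sdiff.mp hw).2 ((List.mem_toFinset).mpr hc)⟩
  -- some A i is nonempty
  have hseed : ∃ i, i ≤ p.length ∧
      (G.neighborFinset (p.getVert i) \ p.support.toFinset).Nonempty := by
    by_contra hc
    push_neg at hc
    obtain ⟨w, hw⟩ := hWne
    have hwW : w ∈ Finset.univ \ p.support.toFinset :=
      Finset.mem_sdiff.mpr ⟨Finset.mem_univ _, fun hc' => hw (List.mem_toFinset.mp hc')⟩
    have hdw : G.degree w + (p.length + 1) + 1 ≤ Fintype.card V := by
      have hsub : G.neighborFinset w ⊆ (Finset.univ \ p.support.toFinset).erase w := by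
        intro z hz
        rw [SimpleGraph.mem_neighborFinset] at hz
        rw [Finset.mem_erase, Finset.mem_sdiff]
        refine ⟨fun hc' => G.irrefl (hc' ▸ hz), Finset.mem_univ _, fun hzP => ?_⟩
        rw [List.mem_toFinset, Walk.mem_support_iff_exists_getVert] at hzP
        obtain ⟨k, rfl, hk⟩ := hzP
        exact Finset.not_nonempty_iff_eq_empty.mpr (hc k hk) ⟨w, (hmemA k w).mpr ⟨hz.symm, hw⟩⟩
      have h1 := Finset.card_le_card hsub
      have h2 := Finset.card_erase_of_mem hwW
      have h3 : 1 ≤ (Finset.univ \ p.support.toFinset).card := Finset.card_pos.mpr ⟨w, hwW⟩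
      rw [← SimpleGraph.card_neighborFinset_eq_degree]
      omega
    have hdx : G.degree (p.getVert 0) ≤ p.length := by
      have hsub : G.neighborFinset (p.getVert 0) ⊆ p.support.toFinset.erase (p.getVert 0) := by
        intro z hz
        rw [SimpleGraph.mem_neighborFinset] at hz
        rw [Finset.mem_erase]
        refine ⟨fun hc' => G.irrefl (hc' ▸ hz), ?_⟩
        by_contra hzP
        exact Finset.not_nonempty_iff_eq_empty.mpr (hc 0 (by omega)) ⟨z, (hmemA 0 z).mpr ⟨hz, fun hc' => hzP (List.mem_toFinset.mpr hc')⟩⟩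
      have h1 := Finset.card_le_card hsub
      have h2 := Finset.card_erase_of_mem (show p.getVert 0 ∈ p.support.toFinset from
        List.mem_toFinset.mpr (getVert_mem_support p (by omega)))
      rw [← SimpleGraph.card_neighborFinset_eq_degree]
      omega
    have hd1 := hδ w
    have hd2 := hδ (p.getVert 0)
    omega
  -- propagation upward
  have hup : ∀ i, i ≤ p.length →
      (G.neighborFinset (p.getVert i) \ p.support.toFinset).Nonempty →
      ∀ d, i + d ≤ p.length →
      (G.neighborFinset (p.getVert (i + d)) \ p.support.toFinset).Nonempty := by
    intro i hi hne d
    induction d with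
    | zero => intro _; exact hne
    | succ d ih =>
      intro hd
      obtain ⟨w, hw⟩ := ih (by omega)
      rw [hmemA] at hw
      have hcas := cascade hδ hp hno (i := i + d) (by omega) hw.2 hw.1
      have he : i + (d + 1) = i + d + 1 := by omega
      rw [he]
      exact Finset.card_pos.mp (by omega)
  -- propagation downward
  have hdown : ∀ i, i ≤ p.length →
      (G.neighborFinset (p.getVert i) \ p.support.toFinset).Nonempty →
      ∀ d, (G.neighborFinset (p.getVert (i - d)) \ p.support.toFinset).Nonempty := by
    intro i hi hne d
    induction d with
    | zero => exact hne
    | succ d ih =>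
      rcases Nat.eq_zero_or_pos (i - d) with h0 | hpos
      · have he : i - (d + 1) = i - d := by omega
        rw [he]
        exact ih
      · obtain ⟨w, hw⟩ := ih
        rw [hmemA] at hw
        have hcas := cascade' hδ hp hno (i := i - d) hpos (by omega) hw.2 hw.1
        have he : i - (d + 1) = i - d - 1 := by omega
        rw [he]
        exact Finset.card_pos.mp (by omega)
  -- every A i is nonempty
  have hAll : ∀ i, i ≤ p.length →
      (G.neighborFinset (p.getVert i) \ p.support.toFinset).Nonempty := by
    obtain ⟨i0, hi0, hne0⟩ := hseed
    intro i hi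
    rcases le_or_gt i i0 with hle | hlt
    · have hgot := hdown i0 hi0 hne0 (i0 - i)
      have he : i0 - (i0 - i) = i := by omega
      rw [he] at hgot
      exact hgot
    · have hgot := hup i0 hi0 hne0 (i - i0) (by omega)
      have he : i0 + (i - i0) = i := by omega
      rw [he] at hgot
      exact hgot
  -- A 3 has two elements
  have hA3 : 2 ≤ (G.neighborFinset (p.getVert 3) \ p.support.toFinset).card := by
    obtain ⟨w, hw⟩ := hAll 2 (by omega)
    rw [hmemA] at hw
    have hcas := cascade hδ hp hno (i := 2) (by omega) hw.2 hw.1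
    exact hcas
  obtain ⟨a, ha⟩ := hAll 0 (by omega)
  obtain ⟨b, hb, hba⟩ := Finset.exists_mem_ne
    (s := G.neighborFinset (p.getVert 3) \ p.support.toFinset) (by omega) a
  rw [hmemA] at ha hb
  -- a and b have a common neighbour off the path
  have hha := offpath_halfdeg hδ hp hno ha.2
  have hhb := offpath_halfdeg hδ hp hno hb.2
  have hUcard : ((G.neighborFinset a \ p.support.toFinset) ∪
      (G.neighborFinset b \ p.support.toFinset)).card ≤ Fintype.card V - (p.length + 1) := by
    rw [← hWcard]
    apply Finset.card_le_card
    intro z hz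
    rcases Finset.mem_union.mp hz with hz | hz <;>
      exact Finset.mem_sdiff.mpr ⟨Finset.mem_univ _, (Finset.mem_sdiff.mp hz).2⟩
  have hIcard : 0 < ((G.neighborFinset a \ p.support.toFinset) ∩
      (G.neighborFinset b \ p.support.toFinset)).card := by
    have hui := Finset.card_union_add_card_inter (G.neighborFinset a \ p.support.toFinset)
      (G.neighborFinset b \ p.support.toFinset)
    omega
  obtain ⟨c, hc⟩ := Finset.card_pos.mp hIcard
  have hca := Finset.mem_of_mem_inter_left hc
  have hcb := Finset.mem_of_mem_inter_right hc
  rw [Finset.mem_sdiff, SimpleGraph.mem_neighborFinset] at hca hcb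
  have hcnotP : c ∉ p.support := fun hc' => hca.2 (List.mem_toFinset.mpr hc')
  refine move_f3 hp hno (by omega) ha.2 hcnotP hb.2 hba.symm ?_ ?_ ha.1 hca.1 hcb.1.symm hb.1.symm
  · exact fun hc' => G.irrefl (hc' ▸ hca.1)
  · exact fun hc' => G.irrefl (hc' ▸ hcb.1.symm)

lemma base2 (hδ : ∀ w : V, Fintype.card V + 2 ≤ 2 * G.degree w)
    {u v : V} (huv : u ≠ v) :
    ∃ p : G.Walk u v, p.IsPath ∧ p.length = 2 := by
  have hui := Finset.card_union_add_card_inter (G.neighborFinset u) (G.neighborFinset v)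
  have hun : (G.neighborFinset u ∪ G.neighborFinset v).card ≤ Fintype.card V :=
    le_trans (Finset.card_le_univ _) (le_of_eq Finset.card_univ)
  have hdu := hδ u
  have hdv := hδ v
  rw [← SimpleGraph.card_neighborFinset_eq_degree] at hdu hdv
  have hpos : 0 < (G.neighborFinset u ∩ G.neighborFinset v).card := by omega
  obtain ⟨w, hw⟩ := Finset.card_pos.mp hpos
  have hu := Finset.mem_of_mem_inter_left hw
  have hv := Finset.mem_of_mem_inter_right hw
  rw [SimpleGraph.mem_neighborFinset] at hu hv
  refine ⟨Walk.cons hu (Walk.cons hv.symm Walk.nil), ?_, rfl⟩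
  rw [Walk.isPath_def]
  simp only [Walk.support_cons, Walk.support_nil, List.nodup_cons, List.mem_cons,
    List.mem_singleton, List.not_mem_nil, not_false_iff, List.nodup_nil, and_true, or_false]
  refine ⟨?_, ?_⟩
  · rintro (h | h)
    · exact G.irrefl (h ▸ hu)
    · exact huv h
  · intro h
    exact G.irrefl (h ▸ hv)

lemma base3 (hδ : ∀ w : V, Fintype.card V + 2 ≤ 2 * G.degree w)
    {u v : V} (huv : u ≠ v) :
    ∃ p : G.Walk u v, p.IsPath ∧ p.length = 3 := by
  -- pick a neighbour a of u with a ≠ v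
  have hdu := hδ u
  rw [← SimpleGraph.card_neighborFinset_eq_degree] at hdu
  have hn2 : 2 ≤ Fintype.card V := by
    have := le_trans (Finset.card_le_univ (G.neighborFinset u)) (le_of_eq Finset.card_univ)
    omega
  have hapos : 0 < ((G.neighborFinset u).erase v).card := by
    have h1 := Finset.pred_card_le_card_erase (s := G.neighborFinset u) (a := v)
    omega
  obtain ⟨a, ha⟩ := Finset.card_pos.mp hapos
  rw [Finset.mem_erase, SimpleGraph.mem_neighborFinset] at ha
  obtain ⟨hav, hua⟩ := ha
  -- pick a common neighbour b of a and v with b ≠ u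
  have hui := Finset.card_union_add_card_inter (G.neighborFinset a) (G.neighborFinset v)
  have hun : (G.neighborFinset a ∪ G.neighborFinset v).card ≤ Fintype.card V :=
    le_trans (Finset.card_le_univ _) (le_of_eq Finset.card_univ)
  have hda := hδ a
  have hdv := hδ v
  rw [← SimpleGraph.card_neighborFinset_eq_degree] at hda hdv
  have hbpos : 0 < (((G.neighborFinset a) ∩ (G.neighborFinset v)).erase u).card := by
    have h1 := Finset.pred_card_le_card_erase
      (s := (G.neighborFinset a) ∩ (G.neighborFinset v)) (a := u)
    omega
  obtain ⟨b, hb⟩ := Finset.card_pos.mp hbpos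
  rw [Finset.mem_erase] at hb
  obtain ⟨hbu, hb⟩ := hb
  have hab := Finset.mem_of_mem_inter_left hb
  have hvb := Finset.mem_of_mem_inter_right hb
  rw [SimpleGraph.mem_neighborFinset] at hab hvb
  refine ⟨Walk.cons hua (Walk.cons hab (Walk.cons hvb.symm Walk.nil)), ?_, rfl⟩
  rw [Walk.isPath_def]
  simp only [Walk.support_cons, Walk.support_nil, List.nodup_cons, List.mem_cons,
    List.mem_singleton, List.not_mem_nil, not_false_iff, List.nodup_nil, and_true, or_false]
  refine ⟨?_, ?_, ?_⟩
  · rintro (h | h | h)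
    · exact G.irrefl (h ▸ hua)
    · exact hbu h.symm
    · exact huv h
  · rintro (h | h)
    · exact G.irrefl (h ▸ hab)
    · exact hav h
  · intro h
    exact G.irrefl (h ▸ hvb)

end Counting

end PanAux

theorem stmt_8 {V : Type*} [Fintype V] (G : SimpleGraph V) [DecidableRel G.Adj]
    (h4 : 4 ≤ Fintype.card V)
    (hδ : ∀ v, ((Fintype.card V : ℝ) + 2) / 2 ≤ (G.degree v : ℝ))
    (u v : V) (huv : u ≠ v) (l : ℕ) (hl1 : 2 ≤ l) (hl2 : l ≤ Fintype.card V - 1) :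
    ∃ p : G.Walk u v, p.IsPath ∧ p.length = l := by
  classical
  have hδ2 : ∀ w, Fintype.card V + 2 ≤ 2 * G.degree w := by
    intro w
    have h := hδ w
    rw [div_le_iff₀ (by norm_num : (0:ℝ) < 2)] at h
    have h2 : (Fintype.card V : ℝ) + 2 ≤ ((2 * G.degree w : ℕ) : ℝ) := by push_cast; linarith
    exact_mod_cast h2
  have main : ∀ m : ℕ, 2 ≤ m → m + 1 ≤ Fintype.card V →
      ∃ p : G.Walk u v, p.IsPath ∧ p.length = m := by
    intro m
    induction m using Nat.strong_induction_on with
    | _ m ih =>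
      intro hm2 hmn
      rcases Nat.lt_or_ge m 4 with hm4 | hm4
      · interval_cases m
        · exact PanAux.base2 hδ2 huv
        · exact PanAux.base3 hδ2 huv
      · obtain ⟨p, hp, hlen⟩ := ih (m - 1) (by omega) (by omega) (by omega)
        obtain ⟨q, hq, hqlen⟩ := PanAux.extension hδ2 hp (by omega) (by omega)
        exact ⟨q, hq, by omega⟩
  exact main l hl1 (by omega)
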